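/- Let A, B ⊆ R² be closed convex cones and suppose Ker T_DR = {x : T_DR(x) = 0} is a line through the origin. Then either (A = {0} and B = Ker T_DR), or (A = (Ker T_DR)^⊥ and B = R²), or (A = R² and B = (Ker T_DR)^⊥), or (A = Ker T_DR and B = {0}). Consequently Fix T_DR ≠ {0} and T_DR(R²) ⊆ Fix T_DR. -/

import Mathlib

open RealInnerProductSpace

private lemma var_ineq {F : Type*} [NormedAddCommGroup F] [InnerProductSpace ℝ F]
    {K : Set F} (h : Convex ℝ K) {u y : F} (hy : y ∈ K)
    (hmin : ∀ w ∈ K, ‖u - y‖ ≤ ‖u - w‖) : ∀ w ∈ K, ⟪u - y, w - y⟫ ≤ 0 := by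
  haveI : Nonempty K := ⟨⟨y, hy⟩⟩
  have h1 : ‖u - y‖ = ⨅ w : K, ‖u - w‖ := le_antisymm
    (le_ciInf fun w => hmin w w.2)
    (ciInf_le (f := fun w : K => ‖u - w‖) ⟨0, by rintro a ⟨w, rfl⟩; exact norm_nonneg _⟩ ⟨y, hy⟩)
  exact (norm_eq_iInf_iff_real_inner_le_zero h hy).1 h1

private lemma proj_eq {F : Type*} [NormedAddCommGroup F] [InnerProductSpace ℝ F]
    {K : Set F} (h : Convex ℝ K) {P : F → F}
    (hP : ∀ x, P x ∈ K ∧ ∀ w ∈ K, ‖x - P x‖ ≤ ‖x - w‖) {x p : F} (hp : p ∈ K)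
    (hvar : ∀ w ∈ K, ⟪x - p, w - p⟫ ≤ 0) : P x = p := by
  have h1 := var_ineq h (hP x).1 (hP x).2
  have a := h1 p hp
  have b := hvar (P x) (hP x).1
  have e : ⟪P x - p, P x - p⟫ = ⟪x - p, P x - p⟫ + ⟪x - P x, p - P x⟫ := by
    simp only [inner_sub_left, inner_sub_right]; ring
  have hle : ⟪P x - p, P x - p⟫ ≤ 0 := by rw [e]; linarith
  have h0 : ⟪P x - p, P x - p⟫ = (0:ℝ) := le_antisymm hle real_inner_self_nonneg
  exact sub_eq_zero.1 ((inner_self_eq_zero (𝕜 := ℝ)).1 h0)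

private lemma cone_facts {F : Type*} [NormedAddCommGroup F] [InnerProductSpace ℝ F]
    {K : Set F} (hconv : Convex ℝ K)
    (hcone : ∀ x ∈ K, ∀ t : ℝ, 0 < t → t • x ∈ K)
    {P : F → F} (hP : ∀ x, P x ∈ K ∧ ∀ w ∈ K, ‖x - P x‖ ≤ ‖x - w‖) (x : F) :
    ⟪x - P x, P x⟫ = 0 ∧ ∀ w ∈ K, ⟪w, x - P x⟫ ≤ 0 := by
  have hvar := var_ineq hconv (hP x).1 (hP x).2
  have h2 := hvar ((2:ℝ) • P x) (hcone _ (hP x).1 2 two_pos)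
  have hh := hvar (((1:ℝ)/2) • P x) (hcone _ (hP x).1 _ (by norm_num))
  rw [show (2:ℝ) • P x - P x = P x from by module] at h2
  rw [show ((1:ℝ)/2) • P x - P x = (-(1/2) : ℝ) • P x from by module,
    real_inner_smul_right] at hh
  have ho : ⟪x - P x, P x⟫ = 0 := by nlinarith
  refine ⟨ho, fun w hw => ?_⟩
  have h3 := hvar w hw
  rw [inner_sub_right, ho, sub_zero] at h3
  rw [real_inner_comm]; exact h3

private lemma cone_zero {F : Type*} [NormedAddCommGroup F] [InnerProductSpace ℝ F]
    {K : Set F} (hcone : ∀ x ∈ K, ∀ t : ℝ, 0 < t → t • x ∈ K)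
    {P : F → F} (hP : ∀ x, P x ∈ K ∧ ∀ w ∈ K, ‖x - P x‖ ≤ ‖x - w‖) : (0:F) ∈ K := by
  have h := (hP 0).2 (((1:ℝ)/2) • P 0) (hcone _ (hP 0).1 _ (by norm_num))
  rw [zero_sub, zero_sub, norm_neg, norm_neg, norm_smul] at h
  have h0 : ‖P 0‖ = 0 := by
    have := norm_nonneg (P 0)
    simp only [norm_div, norm_one, Real.norm_ofNat] at h
    linarith
  have : P 0 = 0 := norm_eq_zero.1 h0
  rw [← this]; exact (hP 0).1

private lemma euclid_inner (x y : EuclideanSpace ℝ (Fin 2)) :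
    ⟪x, y⟫ = x 0 * y 0 + x 1 * y 1 := by
  simp [PiLp.inner_apply, Fin.sum_univ_two, RCLike.inner_apply, conj_trivial]; ring

private lemma comp_ne {x : EuclideanSpace ℝ (Fin 2)} (hx : x ≠ 0) : x 0 ≠ 0 ∨ x 1 ≠ 0 := by
  by_contra h; push_neg at h
  exact hx (PiLp.ext fun i => by fin_cases i <;> simp [h.1, h.2])

private lemma parallel2 {v x y : EuclideanSpace ℝ (Fin 2)} (hv : v ≠ 0)
    (hx : ⟪v, x⟫ = 0) (hy : ⟪v, y⟫ = 0) (hx0 : x ≠ 0) : ∃ r : ℝ, y = r • x := by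
  rw [euclid_inner] at hx hy
  have hdet : x 0 * y 1 - x 1 * y 0 = 0 := by
    rcases comp_ne hv with h | h
    · have hz : v 0 * (x 0 * y 1 - x 1 * y 0) = 0 := by linear_combination y 1 * hx - x 1 * hy
      rcases mul_eq_zero.1 hz with h' | h'
      · exact absurd h' h
      · exact h'
    · have hz : v 1 * (x 0 * y 1 - x 1 * y 0) = 0 := by linear_combination x 0 * hy - y 0 * hx
      rcases mul_eq_zero.1 hz with h' | h'
      · exact absurd h' h
      · exact h'
  rcases comp_ne hx0 with h | h
  · have h0 : y 0 = (y 0 / x 0) * x 0 := (div_mul_cancel₀ _ h).symm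
    have h1 : y 1 = (y 0 / x 0) * x 1 := by
      rw [div_mul_eq_mul_div, eq_div_iff h]; linear_combination hdet
    refine ⟨y 0 / x 0, PiLp.ext fun i => ?_⟩
    fin_cases i <;> simp only [PiLp.smul_apply, smul_eq_mul]
    exacts [h0, h1]
  · have h0 : y 0 = (y 1 / x 1) * x 0 := by
      rw [div_mul_eq_mul_div, eq_div_iff h]; linear_combination -hdet
    have h1 : y 1 = (y 1 / x 1) * x 1 := (div_mul_cancel₀ _ h).symm
    refine ⟨y 1 / x 1, PiLp.ext fun i => ?_⟩
    fin_cases i <;> simp only [PiLp.smul_apply, smul_eq_mul]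
    exacts [h0, h1]

set_option maxHeartbeats 1000000 in
/-- Let `A, B ⊆ ℝ²` be closed convex cones and suppose `Ker T_DR` is a line through the
origin, say `Ker T_DR = ℝ • v` with `v ≠ 0`.  Then either `A = {0}` and `B = Ker T_DR`,
or `A = (Ker T_DR)^⊥` and `B = ℝ²`, or `A = ℝ²` and `B = (Ker T_DR)^⊥`, or
`A = Ker T_DR` and `B = {0}`.  Consequently `Fix T_DR ≠ {0}` and
`T_DR(ℝ²) ⊆ Fix T_DR`. -/
theorem stmt17 (A B : Set (EuclideanSpace ℝ (Fin 2)))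
    (hAclosed : IsClosed A) (hAconv : Convex ℝ A)
    (hBclosed : IsClosed B) (hBconv : Convex ℝ B)
    (hAcone : ∀ x ∈ A, ∀ t : ℝ, 0 < t → t • x ∈ A)
    (hBcone : ∀ x ∈ B, ∀ t : ℝ, 0 < t → t • x ∈ B)
    (PA PB T : EuclideanSpace ℝ (Fin 2) → EuclideanSpace ℝ (Fin 2))
    (hPA : ∀ x, PA x ∈ A ∧ ∀ w ∈ A, ‖x - PA x‖ ≤ ‖x - w‖)
    (hPB : ∀ x, PB x ∈ B ∧ ∀ w ∈ B, ‖x - PB x‖ ≤ ‖x - w‖)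
    (hT : ∀ x, T x = (1 / 2 : ℝ) •
      (x + ((2 : ℝ) • PB ((2 : ℝ) • PA x - x) - ((2 : ℝ) • PA x - x))))
    (v : EuclideanSpace ℝ (Fin 2)) (hv : v ≠ 0)
    (hker : {x | T x = 0} = {x | ∃ t : ℝ, x = t • v}) :
    ((A = {0} ∧ B = {x | ∃ t : ℝ, x = t • v}) ∨
     (A = {y | inner ℝ v y = (0 : ℝ)} ∧ B = Set.univ) ∨
     (A = Set.univ ∧ B = {y | inner ℝ v y = (0 : ℝ)}) ∨
     (A = {x | ∃ t : ℝ, x = t • v} ∧ B = {0})) ∧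
    {x | T x = x} ≠ {0} ∧ ∀ x, T (T x) = T x := by
  have hnn : ⟪v, v⟫ ≠ 0 := (inner_self_ne_zero (𝕜 := ℝ)).2 hv
  have hA0 : (0 : EuclideanSpace ℝ (Fin 2)) ∈ A := cone_zero hAcone hPA
  have hB0 : (0 : EuclideanSpace ℝ (Fin 2)) ∈ B := cone_zero hBcone hPB
  have hAF := cone_facts hAconv hAcone hPA
  have hBF := cone_facts hBconv hBcone hPB
  have horthK : ∀ p q : EuclideanSpace ℝ (Fin 2), p ∈ A → (∀ w ∈ B, ⟪w, p⟫ ≤ 0) →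
      (∀ w ∈ A, ⟪w, q⟫ ≤ 0) → -q ∈ B → ⟪p, q⟫ = 0 := by
    intro p q hpA hpB hqA hqB
    have h1 : ⟪p, q⟫ ≤ 0 := hqA p hpA
    have h2 := hpB (-q) hqB
    rw [inner_neg_left] at h2
    have h3 : ⟪q, p⟫ = ⟪p, q⟫ := real_inner_comm p q
    linarith
  have hbwd : ∀ p q : EuclideanSpace ℝ (Fin 2), p ∈ A → (∀ w ∈ B, ⟪w, p⟫ ≤ 0) →
      (∀ w ∈ A, ⟪w, q⟫ ≤ 0) → -q ∈ B → T (p + q) = 0 := by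
    intro p q hpA hpB hqA hqB
    have hpq : ⟪p, q⟫ = 0 := horthK p q hpA hpB hqA hqB
    have hPAx : PA (p + q) = p := by
      refine proj_eq hAconv hPA hpA ?_
      intro w hw
      rw [show p + q - p = q from by module, inner_sub_right]
      have h1 : ⟪q, w⟫ ≤ 0 := by rw [real_inner_comm]; exact hqA w hw
      have h2 : ⟪q, p⟫ = 0 := by rw [real_inner_comm]; exact hpq
      linarith
    have hPBy : PB ((2:ℝ) • PA (p + q) - (p + q)) = -q := by
      rw [hPAx]
      refine proj_eq hBconv hPB hqB ?_
      intro w hw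
      rw [show (2:ℝ) • p - (p + q) - -q = p from by module, sub_neg_eq_add, inner_add_right]
      have h1 : ⟪p, w⟫ ≤ 0 := by rw [real_inner_comm]; exact hpB w hw
      linarith
    rw [hT, hPBy, hPAx]
    module
  have hmem : ∀ p q : EuclideanSpace ℝ (Fin 2), p ∈ A → (∀ w ∈ B, ⟪w, p⟫ ≤ 0) →
      (∀ w ∈ A, ⟪w, q⟫ ≤ 0) → -q ∈ B → ∃ t : ℝ, p + q = t • v := by
    intro p q h1 h2 h3 h4
    exact (Set.ext_iff.1 hker (p + q)).1 (hbwd p q h1 h2 h3 h4)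
  have hfwd : ∀ x : EuclideanSpace ℝ (Fin 2), T x = 0 → ∃ p q : EuclideanSpace ℝ (Fin 2),
      x = p + q ∧ (p ∈ A ∧ ∀ w ∈ B, ⟪w, p⟫ ≤ 0) ∧ ((∀ w ∈ A, ⟪w, q⟫ ≤ 0) ∧ -q ∈ B) := by
    intro x hx
    rw [hT x] at hx
    have hx' : x + ((2:ℝ) • PB ((2:ℝ) • PA x - x) - ((2:ℝ) • PA x - x)) = 0 := by
      rcases smul_eq_zero.1 hx with h | h
      · norm_num at h
      · exact h
    have hb : PB ((2:ℝ) • PA x - x) = PA x - x := by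
      have h2 : (2:ℝ) • PB ((2:ℝ) • PA x - x) = (2:ℝ) • (PA x - x) := by
        linear_combination (norm := module) hx'
      exact smul_right_injective _ (two_ne_zero (α := ℝ)) h2
    refine ⟨PA x, x - PA x, by module, ⟨(hPA x).1, ?_⟩, ⟨(hAF x).2, ?_⟩⟩
    · intro w hw
      have h3 := (hBF ((2:ℝ) • PA x - x)).2 w hw
      rw [hb, show (2:ℝ) • PA x - x - (PA x - x) = PA x from by module] at h3
      exact h3
    · rw [show -(x - PA x) = PA x - x from by module, ← hb]
      exact (hPB _).1
  have hdecomp : ∀ t : ℝ, ∃ p q : EuclideanSpace ℝ (Fin 2),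
      t • v = p + q ∧ (p ∈ A ∧ ∀ w ∈ B, ⟪w, p⟫ ≤ 0) ∧ ((∀ w ∈ A, ⟪w, q⟫ ≤ 0) ∧ -q ∈ B) :=
    fun t => hfwd _ ((Set.ext_iff.1 hker _).2 ⟨t, rfl⟩)
  have haddA : ∀ a b : EuclideanSpace ℝ (Fin 2), a ∈ A → b ∈ A → a + b ∈ A := by
    intro a b ha hb
    have h := hAconv ha hb (by norm_num : (0:ℝ) ≤ 1/2) (by norm_num : (0:ℝ) ≤ 1/2) (by norm_num)
    have h2 := hAcone _ h 2 two_pos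
    rw [show (2:ℝ) • ((1/2:ℝ) • a + (1/2:ℝ) • b) = a + b from by module] at h2
    exact h2
  have haddB : ∀ a b : EuclideanSpace ℝ (Fin 2), a ∈ B → b ∈ B → a + b ∈ B := by
    intro a b ha hb
    have h := hBconv ha hb (by norm_num : (0:ℝ) ≤ 1/2) (by norm_num : (0:ℝ) ≤ 1/2) (by norm_num)
    have h2 := hBcone _ h 2 two_pos
    rw [show (2:ℝ) • ((1/2:ℝ) • a + (1/2:ℝ) • b) = a + b from by module] at h2
    exact h2
  have hclass : (A = {0} ∧ B = {x | ∃ t : ℝ, x = t • v}) ∨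
     (A = {y | inner ℝ v y = (0 : ℝ)} ∧ B = Set.univ) ∨
     (A = Set.univ ∧ B = {y | inner ℝ v y = (0 : ℝ)}) ∨
     (A = {x | ∃ t : ℝ, x = t • v} ∧ B = {0}) := by
    obtain ⟨p, q, hv1, ⟨hpA, hpB⟩, ⟨hqA, hqB⟩⟩ := hdecomp 1
    rw [one_smul] at hv1
    obtain ⟨p', q', hv2, ⟨hpA', hpB'⟩, ⟨hqA', hqB'⟩⟩ := hdecomp (-1)
    have hv2' : -v = p' + q' := by rw [← hv2]; module
    have h0 : (p + p') + (q + q') = 0 := by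
      linear_combination (norm := module) -hv1 - hv2'
    have horth0 : ⟪p + p', q + q'⟫ = 0 := by
      refine horthK _ _ (haddA _ _ hpA hpA') (fun w hw => ?_) (fun w hw => ?_) ?_
      · rw [inner_add_right]
        have h1 := hpB w hw; have h2 := hpB' w hw; linarith
      · rw [inner_add_right]
        have h1 := hqA w hw; have h2 := hqA' w hw; linarith
      · rw [show -(q + q') = -q + -q' from by module]
        exact haddB _ _ hqB hqB'
    have hpp0 : p + p' = 0 := by
      have hqq : q + q' = -(p + p') := by linear_combination (norm := module) h0
      rw [hqq, inner_neg_right] at horth0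
      have h1 : ⟪p + p', p + p'⟫ = (0:ℝ) := by linarith
      exact (inner_self_eq_zero (𝕜 := ℝ)).1 h1
    have hp' : p' = -p := by linear_combination (norm := module) hpp0
    have hq' : q' = -q := by linear_combination (norm := module) h0 - hpp0
    have hpq0 : p = 0 ∨ q = 0 := by
      by_contra hc
      push_neg at hc
      obtain ⟨hp0, hq0⟩ := hc
      rw [hq'] at hqA' hqB'
      obtain ⟨s, hs⟩ := hmem p (-q) hpA hpB hqA' hqB'
      have hipq : ⟪p, q⟫ = 0 := horthK p q hpA hpB hqA hqB
      have h2p : (2:ℝ) • p = (1 + s) • v := by linear_combination (norm := module) hs - hv1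
      have h2q : (2:ℝ) • q = (1 - s) • v := by linear_combination (norm := module) -hs - hv1
      have hkey : (4:ℝ) * ⟪p, q⟫ = (1 + s) * ((1 - s) * ⟪v, v⟫) := by
        calc (4:ℝ) * ⟪p, q⟫ = ⟪(2:ℝ) • p, (2:ℝ) • q⟫ := by
              rw [real_inner_smul_left, real_inner_smul_right]; ring
        _ = (1 + s) * ((1 - s) * ⟪v, v⟫) := by
              rw [h2p, h2q, real_inner_smul_left, real_inner_smul_right]
      rw [hipq, mul_zero] at hkey
      rcases mul_eq_zero.1 hkey.symm with h | h
      · have hs1 : s = -1 := by linarith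
        rw [hs1] at h2p
        have h3 : (2:ℝ) • p = 0 := by rw [h2p]; module
        exact hp0 ((smul_eq_zero.1 h3).resolve_left (by norm_num))
      · rcases mul_eq_zero.1 h with h' | h'
        · have hs1 : s = 1 := by linarith
          rw [hs1] at h2q
          have h3 : (2:ℝ) • q = 0 := by rw [h2q]; module
          exact hq0 ((smul_eq_zero.1 h3).resolve_left (by norm_num))
        · exact hnn h'
    rcases hpq0 with hp0 | hq0
    · -- CASE II : v = q ∈ A° ∩ (-B)
      rw [hp0, zero_add] at hv1
      subst hv1
      rw [hq'] at hqA' hqB'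
      rw [neg_neg] at hqB'
      have hK1z : ∀ y : EuclideanSpace ℝ (Fin 2), y ∈ A → (∀ w ∈ B, ⟪w, y⟫ ≤ 0) → y = 0 := by
        intro y h1 h2
        obtain ⟨t, ht⟩ := hmem y 0 h1 h2 (fun w _ => by simp) (by rw [neg_zero]; exact hB0)
        rw [add_zero] at ht
        have h3 : ⟪y, v⟫ = 0 := horthK y v h1 h2 hqA hqB
        rw [ht, real_inner_smul_left] at h3
        rcases mul_eq_zero.1 h3 with h | h
        · rw [ht, h, zero_smul]
        · exact absurd h hnn
      have hAv : ∀ a ∈ A, ⟪v, a⟫ = 0 := by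
        intro a ha
        have h1 := hqA a ha
        have h2 := hqA' a ha
        rw [inner_neg_right] at h2
        rw [real_inner_comm]; linarith
      have hBpolarv : ∀ y : EuclideanSpace ℝ (Fin 2), (∀ w ∈ B, ⟪w, y⟫ ≤ 0) → ⟪v, y⟫ = 0 := by
        intro y h
        have h1 := h v hqB'
        have h2 := h (-v) hqB
        rw [inner_neg_left] at h2
        linarith
      by_cases hAz : ∀ a ∈ A, a = (0 : EuclideanSpace ℝ (Fin 2))
      · left
        refine ⟨Set.eq_singleton_iff_unique_mem.2 ⟨hA0, hAz⟩, ?_⟩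
        ext b
        simp only [Set.mem_setOf_eq]
        constructor
        · intro hb
          obtain ⟨t, ht⟩ := hmem 0 (-b) hA0 (fun w _ => by simp)
            (fun w hw => by rw [hAz w hw]; simp) (by rw [neg_neg]; exact hb)
          rw [zero_add] at ht
          exact ⟨-t, by linear_combination (norm := module) -ht⟩
        · rintro ⟨t, rfl⟩
          rcases lt_trichotomy t 0 with h | h | h
          · have h2 := hBcone (-v) hqB (-t) (by linarith)
            rw [show (-t) • (-v) = t • v from by module] at h2
            exact h2
          · rw [h, zero_smul]; exact hB0
          · exact hBcone v hqB' t h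
      · push_neg at hAz
        obtain ⟨a₀, ha₀A, ha₀⟩ := hAz
        have ha₀v : ⟪v, a₀⟫ = 0 := hAv a₀ ha₀A
        have ha₀a₀ : (0:ℝ) < ⟪a₀, a₀⟫ := lt_of_le_of_ne real_inner_self_nonneg (Ne.symm ((inner_self_ne_zero (𝕜 := ℝ)).2 ha₀))
        by_cases hopp : ∃ a₁ ∈ A, ⟪a₀, a₁⟫ < 0
        · right; left
          obtain ⟨a₁, ha₁A, ha₁n⟩ := hopp
          have ha₁v : ⟪v, a₁⟫ = 0 := hAv a₁ ha₁A
          obtain ⟨r, hr⟩ := parallel2 hv ha₀v ha₁v ha₀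
          have hrneg : r < 0 := by
            rw [hr, real_inner_smul_right] at ha₁n
            nlinarith
          have hna₀A : -a₀ ∈ A := by
            have h2 := hAcone a₁ ha₁A (-(1/r)) (neg_pos.2 (one_div_neg.2 hrneg))
            rw [hr, smul_smul, show -(1/r) * r = -1 from by field_simp [hrneg.ne],
              show (-1:ℝ) • a₀ = -a₀ from by module] at h2
            exact h2
          have hAeq : A = {y | inner ℝ v y = (0:ℝ)} := by
            ext y
            simp only [Set.mem_setOf_eq]
            constructor
            · exact fun hy => hAv y hy
            · intro hy
              by_cases hy0 : y = 0
              · rw [hy0]; exact hA0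
              · obtain ⟨c, hc⟩ := parallel2 hv ha₀v hy ha₀
                rcases lt_trichotomy c 0 with h | h | h
                · have h2 := hAcone (-a₀) hna₀A (-c) (by linarith)
                  rw [show (-c) • (-a₀) = c • a₀ from by module, ← hc] at h2
                  exact h2
                · exact absurd (by rw [hc, h, zero_smul]) hy0
                · rw [hc]; exact hAcone a₀ ha₀A c h
          refine ⟨hAeq, ?_⟩
          ext x
          simp only [Set.mem_univ, iff_true]
          have hcpol := (hBF x).2
          have hcv : ⟪v, x - PB x⟫ = 0 := hBpolarv _ hcpol
          have hcA : x - PB x ∈ A := by rw [hAeq]; exact hcv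
          have h00 := hK1z _ hcA hcpol
          have hxx : x = PB x := by linear_combination (norm := module) h00
          rw [hxx]; exact (hPB x).1
        · push_neg at hopp
          exfalso
          have ha₀B : a₀ ∈ B := by
            have hq₀pol : ∀ w ∈ B, ⟪w, a₀ - PB a₀⟫ ≤ 0 := (hBF a₀).2
            have horthq : ⟪a₀ - PB a₀, PB a₀⟫ = 0 := (hBF a₀).1
            have hq₀v : ⟪v, a₀ - PB a₀⟫ = 0 := hBpolarv _ hq₀pol
            by_cases hq0 : a₀ - PB a₀ = 0
            · have h4 : a₀ = PB a₀ := by linear_combination (norm := module) hq0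
              rw [h4]; exact (hPB a₀).1
            · exfalso
              obtain ⟨c, hc⟩ := parallel2 hv ha₀v hq₀v ha₀
              have hcle : c ≤ 0 := by
                by_contra hcp
                push_neg at hcp
                have h2 : a₀ - PB a₀ ∈ A := by rw [hc]; exact hAcone a₀ ha₀A c hcp
                exact hq0 (hK1z _ h2 hq₀pol)
              have hle : ⟪a₀ - PB a₀, a₀ - PB a₀⟫ ≤ 0 := by
                have e : ⟪a₀ - PB a₀, a₀ - PB a₀⟫
                    = ⟪a₀ - PB a₀, a₀⟫ - ⟪a₀ - PB a₀, PB a₀⟫ := by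
                  rw [← inner_sub_right]
                rw [e, horthq, sub_zero, hc, real_inner_smul_left]
                nlinarith
              exact hq0 ((inner_self_eq_zero (𝕜 := ℝ)).1
                (le_antisymm hle real_inner_self_nonneg))
          have hna₀pol : ∀ w ∈ A, ⟪w, -a₀⟫ ≤ 0 := by
            intro w hw
            rw [inner_neg_right]
            have h1 := hopp w hw
            have h2 : ⟪w, a₀⟫ = ⟪a₀, w⟫ := real_inner_comm a₀ w
            linarith
          obtain ⟨t, ht⟩ := hmem 0 (-a₀) hA0 (fun w _ => by simp) hna₀pol
            (by rw [neg_neg]; exact ha₀B)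
          rw [zero_add] at ht
          have hiv : ⟪v, -a₀⟫ = 0 := by rw [inner_neg_right, ha₀v, neg_zero]
          rw [ht, real_inner_smul_right] at hiv
          rcases mul_eq_zero.1 hiv with h | h
          · rw [h, zero_smul] at ht
            exact ha₀ (neg_eq_zero.1 ht)
          · exact hnn h
    · -- CASE I : v = p ∈ A ∩ B°
      rw [hq0, add_zero] at hv1
      subst hv1
      rw [hp'] at hpA' hpB'
      have hK2z : ∀ y : EuclideanSpace ℝ (Fin 2),
          (∀ w ∈ A, ⟪w, y⟫ ≤ 0) → -y ∈ B → y = 0 := by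
        intro y h1 h2
        obtain ⟨t, ht⟩ := hmem 0 y hA0 (fun w _ => by simp) h1 h2
        rw [zero_add] at ht
        have h3 : ⟪v, y⟫ = 0 := horthK v y hpA hpB h1 h2
        rw [ht, real_inner_smul_right] at h3
        rcases mul_eq_zero.1 h3 with h | h
        · rw [ht, h, zero_smul]
        · exact absurd h hnn
      have hBv : ∀ b ∈ B, ⟪v, b⟫ = 0 := by
        intro b hb
        have h1 := hpB b hb
        have h2 := hpB' b hb
        rw [inner_neg_right] at h2
        rw [real_inner_comm]; linarith
      have hApolarv : ∀ y : EuclideanSpace ℝ (Fin 2),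
          (∀ w ∈ A, ⟪w, y⟫ ≤ 0) → ⟪v, y⟫ = 0 := by
        intro y h
        have h1 := h v hpA
        have h2 := h (-v) hpA'
        rw [inner_neg_left] at h2
        linarith
      by_cases hBz : ∀ b ∈ B, b = (0 : EuclideanSpace ℝ (Fin 2))
      · right; right; right
        refine ⟨?_, Set.eq_singleton_iff_unique_mem.2 ⟨hB0, hBz⟩⟩
        ext a
        simp only [Set.mem_setOf_eq]
        constructor
        · intro ha
          obtain ⟨t, ht⟩ := hmem a 0 ha (fun w hw => by rw [hBz w hw]; simp)
            (fun w _ => by simp) (by rw [neg_zero]; exact hB0)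
          rw [add_zero] at ht
          exact ⟨t, ht⟩
        · rintro ⟨t, rfl⟩
          rcases lt_trichotomy t 0 with h | h | h
          · have h2 := hAcone (-v) hpA' (-t) (by linarith)
            rw [show (-t) • (-v) = t • v from by module] at h2
            exact h2
          · rw [h, zero_smul]; exact hA0
          · exact hAcone v hpA t h
      · push_neg at hBz
        obtain ⟨b₀, hb₀B, hb₀⟩ := hBz
        have hb₀v : ⟪v, b₀⟫ = 0 := hBv b₀ hb₀B
        have hb₀b₀ : (0:ℝ) < ⟪b₀, b₀⟫ := lt_of_le_of_ne real_inner_self_nonneg (Ne.symm ((inner_self_ne_zero (𝕜 := ℝ)).2 hb₀))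
        by_cases hopp : ∃ b₁ ∈ B, ⟪b₀, b₁⟫ < 0
        · right; right; left
          obtain ⟨b₁, hb₁B, hb₁n⟩ := hopp
          have hb₁v : ⟪v, b₁⟫ = 0 := hBv b₁ hb₁B
          obtain ⟨r, hr⟩ := parallel2 hv hb₀v hb₁v hb₀
          have hrneg : r < 0 := by
            rw [hr, real_inner_smul_right] at hb₁n
            nlinarith
          have hnb₀B : -b₀ ∈ B := by
            have h2 := hBcone b₁ hb₁B (-(1/r)) (neg_pos.2 (one_div_neg.2 hrneg))
            rw [hr, smul_smul, show -(1/r) * r = -1 from by field_simp [hrneg.ne],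
              show (-1:ℝ) • b₀ = -b₀ from by module] at h2
            exact h2
          have hBeq : B = {y | inner ℝ v y = (0:ℝ)} := by
            ext y
            simp only [Set.mem_setOf_eq]
            constructor
            · exact fun hy => hBv y hy
            · intro hy
              by_cases hy0 : y = 0
              · rw [hy0]; exact hB0
              · obtain ⟨c, hc⟩ := parallel2 hv hb₀v hy hb₀
                rcases lt_trichotomy c 0 with h | h | h
                · have h2 := hBcone (-b₀) hnb₀B (-c) (by linarith)
                  rw [show (-c) • (-b₀) = c • b₀ from by module, ← hc] at h2
                  exact h2
                · exact absurd (by rw [hc, h, zero_smul]) hy0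
                · rw [hc]; exact hBcone b₀ hb₀B c h
          refine ⟨?_, hBeq⟩
          ext x
          simp only [Set.mem_univ, iff_true]
          have hqpol := (hAF x).2
          have hqv : ⟪v, x - PA x⟫ = 0 := hApolarv _ hqpol
          have hqB2 : -(x - PA x) ∈ B := by
            rw [hBeq]
            simp only [Set.mem_setOf_eq, inner_neg_right, hqv, neg_zero]
          have h00 := hK2z _ hqpol hqB2
          have hxx : x = PA x := by linear_combination (norm := module) h00
          rw [hxx]; exact (hPA x).1
        · push_neg at hopp
          exfalso
          have hnb₀A : -b₀ ∈ A := by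
            have hq₀pol : ∀ w ∈ A, ⟪w, -b₀ - PA (-b₀)⟫ ≤ 0 := (hAF (-b₀)).2
            have horthq : ⟪-b₀ - PA (-b₀), PA (-b₀)⟫ = 0 := (hAF (-b₀)).1
            have hq₀v : ⟪v, -b₀ - PA (-b₀)⟫ = 0 := hApolarv _ hq₀pol
            by_cases hq0 : -b₀ - PA (-b₀) = 0
            · have h4 : -b₀ = PA (-b₀) := by linear_combination (norm := module) hq0
              rw [h4]; exact (hPA _).1
            · exfalso
              obtain ⟨c, hc⟩ := parallel2 hv hb₀v hq₀v hb₀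
              have hcge : 0 ≤ c := by
                by_contra hcp
                push_neg at hcp
                have h2 : -(-b₀ - PA (-b₀)) ∈ B := by
                  have h3 := hBcone b₀ hb₀B (-c) (by linarith)
                  rw [show (-c) • b₀ = -(c • b₀) from by module, ← hc] at h3
                  exact h3
                exact hq0 (hK2z _ hq₀pol h2)
              have hle : ⟪-b₀ - PA (-b₀), -b₀ - PA (-b₀)⟫ ≤ 0 := by
                have e : ⟪-b₀ - PA (-b₀), -b₀ - PA (-b₀)⟫
                    = ⟪-b₀ - PA (-b₀), -b₀⟫ - ⟪-b₀ - PA (-b₀), PA (-b₀)⟫ := by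
                  rw [← inner_sub_right]
                rw [e, horthq, sub_zero, hc, real_inner_smul_left, inner_neg_right]
                nlinarith
              exact hq0 ((inner_self_eq_zero (𝕜 := ℝ)).1
                (le_antisymm hle real_inner_self_nonneg))
          have hnb₀pol : ∀ w ∈ B, ⟪w, -b₀⟫ ≤ 0 := by
            intro w hw
            rw [inner_neg_right]
            have h1 := hopp w hw
            have h2 : ⟪w, b₀⟫ = ⟪b₀, w⟫ := real_inner_comm b₀ w
            linarith
          obtain ⟨t, ht⟩ := hmem (-b₀) 0 hnb₀A hnb₀pol (fun w _ => by simp)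
            (by rw [neg_zero]; exact hB0)
          rw [add_zero] at ht
          have hiv : ⟪v, -b₀⟫ = 0 := by rw [inner_neg_right, hb₀v, neg_zero]
          rw [ht, real_inner_smul_right] at hiv
          rcases mul_eq_zero.1 hiv with h | h
          · rw [h, zero_smul] at ht
            exact hb₀ (neg_eq_zero.1 ht)
          · exact hnn h
  -- projection formulas
  have hproj_line : ∀ (C : Set (EuclideanSpace ℝ (Fin 2)))
      (P : EuclideanSpace ℝ (Fin 2) → EuclideanSpace ℝ (Fin 2)), Convex ℝ C →
      (∀ x, P x ∈ C ∧ ∀ w ∈ C, ‖x - P x‖ ≤ ‖x - w‖) → C = {x | ∃ t : ℝ, x = t • v} →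
      ∀ y, P y = (⟪v, y⟫ / ⟪v, v⟫) • v := by
    intro C P hconv hP hC y
    refine proj_eq hconv hP ?_ ?_
    · rw [hC]; exact ⟨_, rfl⟩
    · intro w hw
      rw [hC] at hw
      obtain ⟨t, rfl⟩ := hw
      have hyv : ⟪y - (⟪v, y⟫ / ⟪v, v⟫) • v, v⟫ = 0 := by
        rw [inner_sub_left, real_inner_smul_left, div_mul_cancel₀ _ hnn, real_inner_comm]
        ring
      rw [show t • v - (⟪v, y⟫ / ⟪v, v⟫) • v = (t - ⟪v, y⟫ / ⟪v, v⟫) • v from by module,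
        real_inner_smul_right, hyv, mul_zero]
  have hproj_perp : ∀ (C : Set (EuclideanSpace ℝ (Fin 2)))
      (P : EuclideanSpace ℝ (Fin 2) → EuclideanSpace ℝ (Fin 2)), Convex ℝ C →
      (∀ x, P x ∈ C ∧ ∀ w ∈ C, ‖x - P x‖ ≤ ‖x - w‖) → C = {y | inner ℝ v y = (0:ℝ)} →
      ∀ y, P y = y - (⟪v, y⟫ / ⟪v, v⟫) • v := by
    intro C P hconv hP hC y
    have hmem0 : ⟪v, y - (⟪v, y⟫ / ⟪v, v⟫) • v⟫ = 0 := by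
      rw [inner_sub_right, real_inner_smul_right, div_mul_cancel₀ _ hnn, sub_self]
    refine proj_eq hconv hP ?_ ?_
    · rw [hC]; exact hmem0
    · intro w hw
      rw [hC] at hw
      simp only [Set.mem_setOf_eq] at hw
      rw [show y - (y - (⟪v, y⟫ / ⟪v, v⟫) • v) = (⟪v, y⟫ / ⟪v, v⟫) • v from by module,
        real_inner_smul_left, inner_sub_right, hw, hmem0]
      norm_num
  have hproj_univ : ∀ (C : Set (EuclideanSpace ℝ (Fin 2)))
      (P : EuclideanSpace ℝ (Fin 2) → EuclideanSpace ℝ (Fin 2)), Convex ℝ C →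
      (∀ x, P x ∈ C ∧ ∀ w ∈ C, ‖x - P x‖ ≤ ‖x - w‖) → C = Set.univ →
      ∀ y, P y = y := by
    intro C P hconv hP hC y
    refine proj_eq hconv hP (by rw [hC]; trivial) ?_
    intro w _
    rw [sub_self]
    simp
  have hproj_zero : ∀ (C : Set (EuclideanSpace ℝ (Fin 2)))
      (P : EuclideanSpace ℝ (Fin 2) → EuclideanSpace ℝ (Fin 2)),
      (∀ x, P x ∈ C ∧ ∀ w ∈ C, ‖x - P x‖ ≤ ‖x - w‖) →
      C = {0} → ∀ y, P y = 0 := by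
    intro C P hP hC y
    have h := (hP y).1
    rw [hC] at h
    exact h
  have hTQ : ∀ x, T x = x - (⟪v, x⟫ / ⟪v, v⟫) • v := by
    intro x
    rcases hclass with ⟨hA, hB⟩ | ⟨hA, hB⟩ | ⟨hA, hB⟩ | ⟨hA, hB⟩
    · have hPA0 := hproj_zero A PA hPA hA
      have hPBl := hproj_line B PB hBconv hPB hB
      rw [hT x, hPA0, show (2:ℝ) • (0 : EuclideanSpace ℝ (Fin 2)) - x = -x from by module,
        hPBl, inner_neg_right]
      module
    · have hPAp := hproj_perp A PA hAconv hPA hA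
      have hPBu := hproj_univ B PB hBconv hPB hB
      rw [hT x, hPAp, hPBu]
      module
    · have hPAu := hproj_univ A PA hAconv hPA hA
      have hPBp := hproj_perp B PB hBconv hPB hB
      rw [hT x, hPAu, show (2:ℝ) • x - x = x from by module, hPBp]
      module
    · have hPAl := hproj_line A PA hAconv hPA hA
      have hPB0 := hproj_zero B PB hPB hB
      rw [hT x, hPAl, hPB0]
      module
  refine ⟨hclass, ?_, ?_⟩
  · intro hfix
    set w₀ : EuclideanSpace ℝ (Fin 2) := WithLp.toLp 2 ![-(v 1), v 0] with hw₀def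
    have hvw : ⟪v, w₀⟫ = 0 := by
      rw [euclid_inner]
      simp only [hw₀def, PiLp.toLp_apply, Matrix.cons_val_zero, Matrix.cons_val_one, Matrix.head_cons]
      ring
    have hw₀ne : w₀ ≠ 0 := by
      intro h
      have h0 : v 0 = 0 := by
        have := congrArg (fun z : EuclideanSpace ℝ (Fin 2) => z 1) h
        simpa [hw₀def] using this
      have h1 : v 1 = 0 := by
        have := congrArg (fun z : EuclideanSpace ℝ (Fin 2) => z 0) h
        simpa [hw₀def] using this
      exact hv (PiLp.ext fun i => by fin_cases i <;> simp [h0, h1])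
    have hTw : T w₀ = w₀ := by
      rw [hTQ, hvw]
      simp
    have hmemw : w₀ ∈ {x | T x = x} := hTw
    rw [hfix] at hmemw
    exact hw₀ne hmemw
  · intro x
    rw [hTQ, hTQ]
    have h0 : ⟪v, x - (⟪v, x⟫ / ⟪v, v⟫) • v⟫ = 0 := by
      rw [inner_sub_right, real_inner_smul_right, div_mul_cancel₀ _ hnn, sub_self]
    rw [h0]
    simp
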